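/- arXiv:1506.09159 — 4 statements merged into one kernel-verified Lean document; each statement's English description precedes it below -/
import Mathlib

section
/- Let q ∈ (0,1), s ∈ (0,1) and x > 0. Then Γ_q(x+1) ≤ [x+s]_q^{1-s} · Γ_q(x+s). -/
open Real Filter Finset Topology

/-- The q-deformed Gamma function:
    `Γ_q(x) = (1-q)^(1-x) * ∏_{n=0}^∞ (1-q^(n+1))/(1-q^(n+x))`. -/
noncomputable def qGamma (q x : ℝ) : ℝ :=
  (1 - q) ^ (1 - x) * ∏' n : ℕ, (1 - q ^ ((n : ℝ) + 1)) / (1 - q ^ ((n : ℝ) + x))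

/-- The q-bracket: `[x]_q = (1-q^x)/(1-q)`. -/
noncomputable def qBracket (q x : ℝ) : ℝ := (1 - q ^ x) / (1 - q)

lemma qaux_pos {q t : ℝ} (hq0 : 0 < q) (hq1 : q < 1) (ht : 0 < t) :
    0 < 1 - q ^ t := by
  have := Real.rpow_lt_one hq0.le hq1 ht
  linarith

lemma qaux_lt_one {q t : ℝ} (hq0 : 0 < q) (ht : 0 < t) : 1 - q ^ t < 1 := by
  have := Real.rpow_pos_of_pos hq0 t
  linarith

lemma qaux_summable_log {q t : ℝ} (hq0 : 0 < q) (hq1 : q < 1) (ht : 0 < t) :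
    Summable fun n : ℕ => Real.log (1 - q ^ ((n : ℝ) + t)) := by
  have hqt : 0 < 1 - q ^ t := qaux_pos hq0 hq1 ht
  apply Summable.of_norm_bounded (g := fun n : ℕ => (q ^ t / (1 - q ^ t)) * q ^ n)
  · exact (summable_geometric_of_lt_one hq0.le hq1).mul_left _
  · intro n
    have hnt : (0:ℝ) < (n : ℝ) + t := by positivity
    have h1 : q ^ ((n:ℝ) + t) ≤ q ^ t :=
      Real.rpow_le_rpow_of_exponent_ge hq0 hq1.le (le_add_of_nonneg_left (Nat.cast_nonneg n))
    have h2 : 0 < 1 - q ^ ((n:ℝ) + t) := by linarith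
    have h3 : q ^ ((n:ℝ) + t) = q ^ t * q ^ n := by
      rw [← Real.rpow_natCast q n, ← Real.rpow_add hq0]; ring_nf
    have hlog : Real.log (1 - q ^ ((n:ℝ)+t)) ≤ 0 := by
      apply Real.log_nonpos (by linarith)
      have := Real.rpow_pos_of_pos hq0 ((n:ℝ)+t); linarith
    rw [Real.norm_eq_abs, abs_of_nonpos hlog]
    have key : -Real.log (1 - q ^ ((n:ℝ)+t)) ≤ q ^ ((n:ℝ)+t) / (1 - q ^ ((n:ℝ)+t)) := by
      rw [← Real.log_inv]
      have hpos : (0:ℝ) < (1 - q ^ ((n:ℝ)+t))⁻¹ := by positivity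
      have := Real.log_le_sub_one_of_pos hpos
      have heq : (1 - q ^ ((n:ℝ)+t))⁻¹ - 1 = q ^ ((n:ℝ)+t) / (1 - q ^ ((n:ℝ)+t)) := by
        field_simp
        ring
      linarith
    have hmono : q ^ ((n:ℝ)+t) / (1 - q ^ ((n:ℝ)+t)) ≤ q ^ ((n:ℝ)+t) / (1 - q ^ t) := by
      apply div_le_div_of_nonneg_left (by positivity) hqt (by linarith)
      
    calc -Real.log (1 - q ^ ((n:ℝ)+t)) ≤ q ^ ((n:ℝ)+t) / (1 - q ^ ((n:ℝ)+t)) := key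
      _ ≤ q ^ ((n:ℝ)+t) / (1 - q ^ t) := hmono
      _ = q ^ t / (1 - q ^ t) * q ^ n := by rw [h3]; ring

lemma qaux_multipliable {q y : ℝ} (hq0 : 0 < q) (hq1 : q < 1) (hy : 0 < y) :
    Multipliable fun n : ℕ => (1 - q ^ ((n : ℝ) + 1)) / (1 - q ^ ((n : ℝ) + y)) := by
  have hfn : ∀ (_ : Unit) (n : ℕ), 0 < (1 - q ^ ((n : ℝ) + 1)) / (1 - q ^ ((n : ℝ) + y)) := by
    intro _ n
    have h1 : 0 < 1 - q ^ ((n:ℝ)+1) := qaux_pos hq0 hq1 (by positivity)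
    have h2 : 0 < 1 - q ^ ((n:ℝ)+y) := qaux_pos hq0 hq1 (by positivity)
    positivity
  exact Real.multipliable_of_summable_log (hfn ())
    (by
      have := (qaux_summable_log hq0 hq1 one_pos).sub (qaux_summable_log hq0 hq1 hy)
      apply this.congr
      intro n
      rw [Real.log_div (ne_of_gt (qaux_pos hq0 hq1 (by positivity)))
        (ne_of_gt (qaux_pos hq0 hq1 (by positivity)))])

lemma qaux_gm {q s a b : ℝ} (hq0 : 0 < q) (hq1 : q < 1) (hs0 : 0 ≤ s) (hs1 : s ≤ 1)
    (ha : 0 < a) (hb : 0 < b) :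
    (1 - q ^ a) ^ s * (1 - q ^ b) ^ (1 - s) ≤ 1 - q ^ (s * a + (1 - s) * b) := by
  set u := q ^ a with hu
  set v := q ^ b with hv
  have hu0 : 0 < u := Real.rpow_pos_of_pos hq0 a
  have hv0 : 0 < v := Real.rpow_pos_of_pos hq0 b
  have hu1 : u < 1 := Real.rpow_lt_one hq0.le hq1 ha
  have hv1 : v < 1 := Real.rpow_lt_one hq0.le hq1 hb
  have h1 : q ^ (s * a + (1 - s) * b) = u ^ s * v ^ (1 - s) := by
    rw [hu, hv, ← Real.rpow_mul hq0.le, ← Real.rpow_mul hq0.le, ← Real.rpow_add hq0]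
    ring_nf
  have gm1 : u ^ s * v ^ (1 - s) ≤ s * u + (1 - s) * v :=
    Real.geom_mean_le_arith_mean2_weighted hs0 (by linarith) hu0.le hv0.le (by ring)
  have gm2 : (1 - u) ^ s * (1 - v) ^ (1 - s) ≤ s * (1 - u) + (1 - s) * (1 - v) :=
    Real.geom_mean_le_arith_mean2_weighted hs0 (by linarith) (by linarith) (by linarith) (by ring)
  rw [h1]
  have : s * (1 - u) + (1 - s) * (1 - v) = 1 - (s * u + (1 - s) * v) := by ring
  linarith

lemma qaux_telescope {a : ℕ → ℝ} (h : ∀ n, a n ≠ 0) (N : ℕ) :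
    ∏ n ∈ range N, (a n / a (n + 1)) = a 0 / a N := by
  induction N with
  | zero => simp [div_self (h 0)]
  | succ N ih =>
      rw [prod_range_succ, ih, div_mul_div_comm, div_eq_div_iff (mul_ne_zero (h N) (h (N+1))) (h (N+1))]
      ring

lemma qaux_term {q s x : ℝ} (hq0 : 0 < q) (hq1 : q < 1) (hs0 : 0 < s) (hs1 : s < 1)
    (hx : 0 < x) (n : ℕ) :
    (1 - q ^ ((n : ℝ) + 1)) / (1 - q ^ ((n : ℝ) + (x + 1))) ≤
      (1 - q ^ ((n : ℝ) + 1)) / (1 - q ^ ((n : ℝ) + (x + s))) *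
        ((1 - q ^ ((n : ℝ) + (x + s))) / (1 - q ^ (((n : ℝ) + 1) + (x + s)))) ^ (1 - s) := by
  set A := 1 - q ^ ((n : ℝ) + 1) with hA
  set B := 1 - q ^ ((n : ℝ) + (x + 1)) with hB
  set C := 1 - q ^ ((n : ℝ) + (x + s)) with hC
  set D := 1 - q ^ (((n : ℝ) + 1) + (x + s)) with hD
  have hApos : 0 < A := qaux_pos hq0 hq1 (by positivity)
  have hBpos : 0 < B := qaux_pos hq0 hq1 (by positivity)
  have hCpos : 0 < C := qaux_pos hq0 hq1 (by positivity)
  have hDpos : 0 < D := qaux_pos hq0 hq1 (by positivity)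
  have hgm : C ^ s * D ^ (1 - s) ≤ B := by
    have := qaux_gm (q := q) (a := (n : ℝ) + (x + s)) (b := ((n : ℝ) + 1) + (x + s))
      hq0 hq1 hs0.le hs1.le (by positivity) (by positivity)
    rw [show s * ((n : ℝ) + (x + s)) + (1 - s) * (((n : ℝ) + 1) + (x + s))
        = (n : ℝ) + (x + 1) by ring] at this
    exact this
  have hCs : C ^ s * C ^ (1 - s) = C := by
    rw [← Real.rpow_add hCpos]; norm_num
  have heq : A / C * (C / D) ^ (1 - s) = A / (C ^ s * D ^ (1 - s)) := by
    calc A / C * (C / D) ^ (1 - s) = A * C ^ (1 - s) / (C * D ^ (1 - s)) := by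
          rw [Real.div_rpow hCpos.le hDpos.le, div_mul_div_comm]
      _ = A * C ^ (1 - s) / ((C ^ s * C ^ (1 - s)) * D ^ (1 - s)) := by rw [hCs]
      _ = A / (C ^ s * D ^ (1 - s)) := by
          rw [div_eq_div_iff (by positivity) (by positivity)]; ring
  rw [heq]
  have hden : 0 < C ^ s * D ^ (1 - s) := by positivity
  exact div_le_div_of_nonneg_left hApos.le hden hgm

theorem qGamma_lower (q s x : ℝ) (hq : q ∈ Set.Ioo (0 : ℝ) 1)
    (hs : s ∈ Set.Ioo (0 : ℝ) 1) (hx : 0 < x) :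
    qGamma q (x + 1) ≤ qBracket q (x + s) ^ (1 - s) * qGamma q (x + s) := by
  obtain ⟨hq0, hq1⟩ := hq
  obtain ⟨hs0, hs1⟩ := hs
  have hc : 0 < 1 - q := by linarith
  set a : ℕ → ℝ := fun n => 1 - q ^ ((n : ℝ) + (x + s)) with ha
  have hapos : ∀ n, 0 < a n := fun n => qaux_pos hq0 hq1 (by positivity)
  set F : ℕ → ℝ := fun n => (1 - q ^ ((n : ℝ) + 1)) / (1 - q ^ ((n : ℝ) + (x + 1))) with hF
  set G : ℕ → ℝ := fun n => (1 - q ^ ((n : ℝ) + 1)) / (1 - q ^ ((n : ℝ) + (x + s))) with hG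
  have hFm : Multipliable F := qaux_multipliable hq0 hq1 (by positivity)
  have hGm : Multipliable G := qaux_multipliable hq0 hq1 (by positivity)
  -- partial products
  have hpartial : ∀ N : ℕ, ∏ n ∈ range N, F n ≤
      (∏ n ∈ range N, G n) * (a 0 / a N) ^ (1 - s) := by
    intro N
    have step1 : ∏ n ∈ range N, F n ≤
        ∏ n ∈ range N, (G n * (a n / a (n + 1)) ^ (1 - s)) := by
      apply Finset.prod_le_prod
      · intro n _
        have h1 : 0 < 1 - q ^ ((n:ℝ) + 1) := qaux_pos hq0 hq1 (by positivity)
        have h2 : 0 < 1 - q ^ ((n:ℝ) + (x+1)) := qaux_pos hq0 hq1 (by positivity)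
        positivity
      · intro n _
        have := qaux_term hq0 hq1 hs0 hs1 hx n
        simpa [hF, hG, ha, Nat.cast_add, Nat.cast_one] using this
    have step2 : ∏ n ∈ range N, (G n * (a n / a (n + 1)) ^ (1 - s)) =
        (∏ n ∈ range N, G n) * (a 0 / a N) ^ (1 - s) := by
      rw [Finset.prod_mul_distrib, Real.finset_prod_rpow _ _
        (fun n _ => div_nonneg (hapos n).le (hapos (n+1)).le) _, qaux_telescope (fun n => (hapos n).ne') N]
    linarith [step1, step2.le]
  -- limits
  have hFlim : Tendsto (fun N => ∏ n ∈ range N, F n) atTop (𝓝 (∏' n, F n)) :=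
    hFm.hasProd.tendsto_prod_nat
  have hGlim : Tendsto (fun N => ∏ n ∈ range N, G n) atTop (𝓝 (∏' n, G n)) :=
    hGm.hasProd.tendsto_prod_nat
  have halim : Tendsto (fun N : ℕ => a N) atTop (𝓝 1) := by
    have h0 : Tendsto (fun N : ℕ => q ^ (x + s) * q ^ N) atTop (𝓝 0) := by
      simpa using (tendsto_pow_atTop_nhds_zero_of_lt_one hq0.le hq1).const_mul (q ^ (x+s))
    have heq : ∀ N : ℕ, a N = 1 - q ^ (x + s) * q ^ N := by
      intro N
      simp only [ha]
      rw [← Real.rpow_natCast q N, ← Real.rpow_add hq0, add_comm ((x:ℝ)+s) (N:ℝ)]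
    simp only [heq]
    simpa using tendsto_const_nhds.sub h0
  have hTlim : Tendsto (fun N : ℕ => (a 0 / a N) ^ (1 - s)) atTop
      (𝓝 ((a 0) ^ (1 - s))) := by
    have : Tendsto (fun N : ℕ => a 0 / a N) atTop (𝓝 (a 0)) := by
      have h : Tendsto (fun N : ℕ => a 0 / a N) atTop (𝓝 (a 0 / 1)) :=
        (tendsto_const_nhds (x := a 0)).div halim one_ne_zero
      rwa [div_one] at h
    exact this.rpow_const (Or.inr (by linarith))
  have key : (∏' n, F n) ≤ (∏' n, G n) * (a 0) ^ (1 - s) :=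
    le_of_tendsto_of_tendsto' hFlim (hGlim.mul hTlim) hpartial
  -- assembly
  have ha0 : a 0 = 1 - q ^ (x + s) := by rw [ha]; norm_num
  have ha0pos : 0 < a 0 := hapos 0
  rw [qGamma, qGamma, qBracket]
  rw [show (1 : ℝ) - (x + 1) = -x by ring]
  have hrhs : ((1 - q ^ (x + s)) / (1 - q)) ^ (1 - s) *
      ((1 - q) ^ (1 - (x + s)) * ∏' n, G n) =
      (1 - q) ^ (-x) * ((∏' n, G n) * (a 0) ^ (1 - s)) := by
    rw [ha0] at *
    rw [Real.div_rpow (by rw [← ha0]; exact ha0pos.le) hc.le]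
    rw [show ((1:ℝ) - q) ^ (1 - (x + s)) = (1 - q) ^ (-x) * (1 - q) ^ (1 - s) by
      rw [← Real.rpow_add hc]; ring_nf]
    field_simp
  rw [hrhs]
  exact mul_le_mul_of_nonneg_left key (Real.rpow_pos_of_pos hc _).le
end

section
/- Let q ∈ (0,1) be fixed. Then the function U defined for x > 0 by U(x) = Γ_q(x+1) / Γ_q(x + 1/2) is strictly increasing on (0,∞). -/
set_option maxHeartbeats 1000000

open Real


lemma qG_pow_lt_one {q : ℝ} (hq0 : 0 < q) (hq1 : q < 1) {y : ℝ} (hy : 0 < y) (n : ℕ) :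
    q ^ ((n : ℝ) + y) < 1 :=
  Real.rpow_lt_one hq0.le hq1 (by positivity)

lemma qG_sub_pos {q : ℝ} (hq0 : 0 < q) (hq1 : q < 1) {y : ℝ} (hy : 0 < y) (n : ℕ) :
    0 < 1 - q ^ ((n : ℝ) + y) :=
  sub_pos.2 (qG_pow_lt_one hq0 hq1 hy n)

lemma qG_summable {q : ℝ} (hq0 : 0 < q) (hq1 : q < 1) {y : ℝ} (hy : 0 < y) :
    Summable (fun n : ℕ => Real.log (1 - q ^ ((n : ℝ) + y))) := by
  rw [← summable_neg_iff]
  have hqy : q ^ y < 1 := Real.rpow_lt_one hq0.le hq1 hy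
  have hqy0 : 0 < q ^ y := Real.rpow_pos_of_pos hq0 y
  refine Summable.of_nonneg_of_le (f := fun n : ℕ => (q ^ y / (1 - q ^ y)) * q ^ n) ?_ ?_
    ((summable_geometric_of_lt_one hq0.le hq1).mul_left _)
  · intro n
    simp only [neg_nonneg]
    exact Real.log_nonpos (qG_sub_pos hq0 hq1 hy n).le (by linarith [Real.rpow_pos_of_pos hq0 ((n:ℝ)+y)])
  · intro n
    have ht1 : q ^ ((n : ℝ) + y) < 1 := qG_pow_lt_one hq0 hq1 hy n
    have ht0 : 0 < q ^ ((n : ℝ) + y) := Real.rpow_pos_of_pos hq0 _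
    have hts : 0 < 1 - q ^ ((n : ℝ) + y) := by linarith
    have heq : q ^ ((n : ℝ) + y) = q ^ n * q ^ y := by
      rw [← Real.rpow_natCast q n, ← Real.rpow_add hq0]
    have hle : q ^ ((n : ℝ) + y) ≤ q ^ y := by
      rw [heq]
      nlinarith [pow_le_one₀ hq0.le hq1.le (n := n), pow_pos hq0 n]
    have key : -Real.log (1 - q ^ ((n : ℝ) + y)) ≤ q ^ ((n : ℝ) + y) / (1 - q ^ ((n : ℝ) + y)) := by
      rw [← Real.log_inv]
      have := Real.log_le_sub_one_of_pos (x := (1 - q ^ ((n : ℝ) + y))⁻¹) (by positivity)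
      have h2 : (1 - q ^ ((n : ℝ) + y))⁻¹ - 1 = q ^ ((n : ℝ) + y) / (1 - q ^ ((n : ℝ) + y)) := by
        field_simp
        ring
      linarith [this, h2.le]
    refine key.trans ?_
    have h3 : q ^ ((n : ℝ) + y) / (1 - q ^ ((n : ℝ) + y)) ≤ q ^ ((n : ℝ) + y) / (1 - q ^ y) := by
      apply div_le_div_of_nonneg_left ht0.le (by linarith) (by linarith)
    refine h3.trans ?_
    rw [heq]
    exact le_of_eq (by ring)
lemma qG_eq {q : ℝ} (hq0 : 0 < q) (hq1 : q < 1) {y : ℝ} (hy : 0 < y) :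
    qGamma q y = (1 - q) ^ (1 - y) *
      Real.exp (∑' n : ℕ, (Real.log (1 - q ^ ((n : ℝ) + 1)) - Real.log (1 - q ^ ((n : ℝ) + y)))) := by
  unfold qGamma
  congr 1
  set f : ℕ → ℝ := fun n => (1 - q ^ ((n : ℝ) + 1)) / (1 - q ^ ((n : ℝ) + y)) with hf
  have hpos : ∀ n, 0 < f n := fun n =>
    div_pos (qG_sub_pos hq0 hq1 one_pos n) (qG_sub_pos hq0 hq1 hy n)
  have hlog : ∀ n, Real.log (f n)
      = Real.log (1 - q ^ ((n : ℝ) + 1)) - Real.log (1 - q ^ ((n : ℝ) + y)) := fun n =>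
    Real.log_div (qG_sub_pos hq0 hq1 one_pos n).ne' (qG_sub_pos hq0 hq1 hy n).ne'
  have hsum : Summable fun n => Real.log (f n) := by
    have := (qG_summable hq0 hq1 one_pos).sub (qG_summable hq0 hq1 hy)
    exact this.congr fun n => (hlog n).symm
  have hP : HasProd f (Real.exp (∑' n, Real.log (f n))) := by
    have h := hsum.hasSum.rexp
    have he : (Real.exp ∘ fun n => Real.log (f n)) = f := funext fun n => Real.exp_log (hpos n)
    rwa [he] at h
  rw [hP.tprod_eq]
  congr 1
  exact tsum_congr hlog
lemma qG_ratio {q : ℝ} (hq0 : 0 < q) (hq1 : q < 1) {x : ℝ} (hx : 0 < x) :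
    qGamma q (x + 1) / qGamma q (x + 1 / 2)
      = (1 - q) ^ (-(1/2) : ℝ) * Real.exp
        (∑' n : ℕ, (Real.log (1 - q ^ ((n : ℝ) + (x + 1/2))) - Real.log (1 - q ^ ((n : ℝ) + (x + 1))))) := by
  have h1 : (0:ℝ) < x + 1 := by linarith
  have h2 : (0:ℝ) < x + 1/2 := by linarith
  rw [qG_eq hq0 hq1 h1, qG_eq hq0 hq1 h2, mul_div_mul_comm]
  have hq' : (0:ℝ) < 1 - q := by linarith
  have hL := qG_summable hq0 hq1 (y := 1) one_pos
  have hu := qG_summable hq0 hq1 h1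
  have hv := qG_summable hq0 hq1 h2
  have hrp : (1 - q) ^ ((1:ℝ) - (x + 1)) / (1 - q) ^ ((1:ℝ) - (x + 1/2))
      = (1 - q) ^ (-(1/2) : ℝ) := by
    rw [← Real.rpow_sub hq']
    congr 1
    ring
  rw [hrp, ← Real.exp_sub]
  congr 1
  rw [← Summable.tsum_sub (hL.sub hu) (hL.sub hv)]
  exact congrArg Real.exp (tsum_congr fun n => by ring)
lemma qG_term_lt {q : ℝ} (hq0 : 0 < q) (hq1 : q < 1) {x y : ℝ} (hx : 0 < x) (hy : 0 < y)
    (hxy : x < y) (n : ℕ) :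
    Real.log (1 - q ^ ((n : ℝ) + (x + 1/2))) - Real.log (1 - q ^ ((n : ℝ) + (x + 1)))
      < Real.log (1 - q ^ ((n : ℝ) + (y + 1/2))) - Real.log (1 - q ^ ((n : ℝ) + (y + 1))) := by
  set s : ℝ := q ^ ((1/2 : ℝ)) with hs
  set A : ℝ := q ^ ((n : ℝ) + x) with hA
  set B : ℝ := q ^ ((n : ℝ) + y) with hB
  have hs0 : 0 < s := Real.rpow_pos_of_pos hq0 _
  have hs1 : s < 1 := Real.rpow_lt_one hq0.le hq1 (by norm_num)
  have hss : s * s = q := by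
    rw [hs, ← Real.rpow_add hq0]; norm_num
  have hA0 : 0 < A := Real.rpow_pos_of_pos hq0 _
  have hA1 : A < 1 := qG_pow_lt_one hq0 hq1 hx n
  have hB0 : 0 < B := Real.rpow_pos_of_pos hq0 _
  have hBA : B < A := Real.rpow_lt_rpow_of_exponent_gt hq0 hq1 (by linarith)
  have e1 : q ^ ((n : ℝ) + (x + 1/2)) = A * s := by
    rw [show (n : ℝ) + (x + 1/2) = ((n : ℝ) + x) + (1/2) by ring, Real.rpow_add hq0, hA, hs]
  have e2 : q ^ ((n : ℝ) + (x + 1)) = A * q := by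
    rw [show (n : ℝ) + (x + 1) = ((n : ℝ) + x) + 1 by ring, Real.rpow_add hq0, Real.rpow_one, hA]
  have e3 : q ^ ((n : ℝ) + (y + 1/2)) = B * s := by
    rw [show (n : ℝ) + (y + 1/2) = ((n : ℝ) + y) + (1/2) by ring, Real.rpow_add hq0, hB, hs]
  have e4 : q ^ ((n : ℝ) + (y + 1)) = B * q := by
    rw [show (n : ℝ) + (y + 1) = ((n : ℝ) + y) + 1 by ring, Real.rpow_add hq0, Real.rpow_one, hB]
  rw [e1, e2, e3, e4]
  have p1 : 0 < 1 - A * s := by nlinarith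
  have p2 : 0 < 1 - A * q := by nlinarith
  have p3 : 0 < 1 - B * s := by nlinarith
  have p4 : 0 < 1 - B * q := by nlinarith
  rw [← Real.log_div p1.ne' p2.ne', ← Real.log_div p3.ne' p4.ne']
  apply Real.log_lt_log (div_pos p1 p2)
  rw [div_lt_div_iff₀ p2 p4]
  nlinarith [mul_pos (sub_pos.2 hBA) (show 0 < s - q by nlinarith)]

theorem qGammaRatio_strictMonoOn (q : ℝ) (hq : q ∈ Set.Ioo (0 : ℝ) 1) :
    StrictMonoOn (fun x : ℝ => qGamma q (x + 1) / qGamma q (x + 1 / 2))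
      (Set.Ioi (0 : ℝ)) := by
  obtain ⟨hq0, hq1⟩ := hq
  intro x hx y hy hxy
  simp only [Set.mem_Ioi] at hx hy
  show qGamma q (x + 1) / qGamma q (x + 1 / 2) < qGamma q (y + 1) / qGamma q (y + 1 / 2)
  rw [qG_ratio hq0 hq1 hx, qG_ratio hq0 hq1 hy]
  have hc : (0:ℝ) < (1 - q) ^ (-(1/2) : ℝ) := Real.rpow_pos_of_pos (by linarith) _
  apply mul_lt_mul_of_pos_left _ hc
  rw [Real.exp_lt_exp]
  have hsx : Summable (fun n : ℕ => Real.log (1 - q ^ ((n : ℝ) + (x + 1/2)))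
      - Real.log (1 - q ^ ((n : ℝ) + (x + 1)))) := by
    exact (qG_summable hq0 hq1 (by linarith : (0:ℝ) < x + 1/2)).sub
      (qG_summable hq0 hq1 (by linarith : (0:ℝ) < x + 1))
  have hsy : Summable (fun n : ℕ => Real.log (1 - q ^ ((n : ℝ) + (y + 1/2)))
      - Real.log (1 - q ^ ((n : ℝ) + (y + 1)))) := by
    exact (qG_summable hq0 hq1 (by linarith : (0:ℝ) < y + 1/2)).sub
      (qG_summable hq0 hq1 (by linarith : (0:ℝ) < y + 1))
  exact Summable.tsum_lt_tsum (i := 0) (fun n => (qG_term_lt hq0 hq1 hx hy hxy n).le)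
    (qG_term_lt hq0 hq1 hx hy hxy 0) hsx hsy
end

section
/- Let q ∈ (0,1) be fixed. Then the function G defined for x > 0 by G(x) = [x + 1/2]_q^{-1/2} · Γ_q(x+1) / Γ_q(x + 1/2) is increasing on (0,∞) and tends to 1 as x → ∞; consequently G(x) ≤ 1 for all x > 0. -/
open Real Filter

section aux
variable {q : ℝ} (hq0 : 0 < q) (hq1 : q < 1)

/-- exp/log bridge for infinite products of positive reals. -/
lemma hasProd_exp_of_hasSum_log {f : ℕ → ℝ} (hf : ∀ n, 0 < f n) {a : ℝ}
    (h : HasSum (fun n => Real.log (f n)) a) : HasProd f (Real.exp a) := by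
  have h2 : f = Real.exp ∘ fun n => Real.log (f n) := by
    ext n; simp [Real.exp_log (hf n)]
  rw [h2]; exact h.rexp

include hq0 hq1 in
lemma qpow_lt_one {r : ℝ} (hr : 0 < r) : q ^ r < 1 :=
  Real.rpow_lt_one hq0.le hq1 hr

include hq0 hq1 in
lemma summable_log_q (c : ℝ) (hc : 0 < c) :
    Summable (fun n : ℕ => Real.log (1 - q ^ ((n : ℝ) + c))) := by
  have key : ∀ n : ℕ, |Real.log (1 - q ^ ((n : ℝ) + c))| ≤ (q ^ c / (1 - q ^ c)) * q ^ (n : ℕ) := by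
    intro n
    have hnc : (0:ℝ) < (n : ℝ) + c := by positivity
    have hu0 : 0 < q ^ ((n : ℝ) + c) := Real.rpow_pos_of_pos hq0 _
    have hu1 : q ^ ((n : ℝ) + c) < 1 := qpow_lt_one hq0 hq1 hnc
    have huc : q ^ ((n : ℝ) + c) ≤ q ^ c := by
      apply Real.rpow_le_rpow_of_exponent_ge hq0 hq1.le
      linarith [Nat.cast_nonneg (α := ℝ) n]
    have hc1 : q ^ c < 1 := qpow_lt_one hq0 hq1 hc
    have h1u : 0 < 1 - q ^ ((n : ℝ) + c) := by linarith
    have hlogle : Real.log (1 - q ^ ((n : ℝ) + c)) ≤ 0 :=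
      Real.log_nonpos (by linarith) (by linarith)
    rw [abs_of_nonpos hlogle]
    have := Real.log_le_sub_one_of_pos (x := (1 - q ^ ((n : ℝ) + c))⁻¹) (by positivity)
    rw [Real.log_inv] at this
    have hle : -Real.log (1 - q ^ ((n : ℝ) + c)) ≤ q ^ ((n : ℝ) + c) / (1 - q ^ ((n : ℝ) + c)) := by
      have : (1 - q ^ ((n : ℝ) + c))⁻¹ - 1 = q ^ ((n : ℝ) + c) / (1 - q ^ ((n : ℝ) + c)) := by
        field_simp
        ring
      linarith [this ▸ ‹-Real.log (1 - q ^ ((n : ℝ) + c)) ≤ (1 - q ^ ((n : ℝ) + c))⁻¹ - 1›]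
    refine hle.trans ?_
    have hqn : q ^ ((n : ℝ) + c) = q ^ c * q ^ (n : ℕ) := by
      rw [← Real.rpow_natCast q n, ← Real.rpow_add hq0]; ring_nf
    have step : q ^ ((n : ℝ) + c) / (1 - q ^ ((n : ℝ) + c)) ≤ q ^ ((n : ℝ) + c) / (1 - q ^ c) := by
      gcongr
    refine step.trans ?_
    rw [hqn, div_mul_eq_mul_div, mul_comm]
  exact Summable.of_abs <| Summable.of_nonneg_of_le (fun n => abs_nonneg _) key
    (((summable_geometric_of_lt_one hq0.le hq1)).mul_left _)

end aux

section core

/-- Core monotonicity: `d(t) = log(1-ts)+log(1-ts³)-2log(1-ts²)` is decreasing in `t`. -/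
lemma dq_core_mono {s t1 t2 : ℝ} (hs0 : 0 < s) (hs1 : s < 1) (ht2 : 0 < t2) (ht : t2 ≤ t1)
    (ht1 : t1 < 1) :
    Real.log (1 - t1*s) + Real.log (1 - t1*(s*s*s)) - 2 * Real.log (1 - t1*(s*s))
      ≤ Real.log (1 - t2*s) + Real.log (1 - t2*(s*s*s)) - 2 * Real.log (1 - t2*(s*s)) := by
  have ht10 : 0 < t1 := lt_of_lt_of_le ht2 ht
  have ht21 : t2 < 1 := lt_of_le_of_lt ht ht1
  have hA1 : 0 < 1 - t1*s := by nlinarith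
  have hB1 : 0 < 1 - t1*(s*s*s) := by nlinarith
  have hC1 : 0 < 1 - t1*(s*s) := by nlinarith
  have hA2 : 0 < 1 - t2*s := by nlinarith
  have hB2 : 0 < 1 - t2*(s*s*s) := by nlinarith
  have hC2 : 0 < 1 - t2*(s*s) := by nlinarith
  have key2 : t2*(1-t1*(s*s))^2 ≤ t1*(1-t2*(s*s))^2 := by
    have h1 : (1-t1*(s*s)) ≤ (1-t2*(s*s)) := by nlinarith
    exact mul_le_mul ht (pow_le_pow_left₀ hC1.le h1 2) (by positivity) ht10.le
  have hfac : 0 ≤ s*(1-s)^2*(t1*(1-t2*(s*s))^2 - t2*(1-t1*(s*s))^2) := by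
    have := sub_nonneg.2 key2
    positivity
  have hpoly : (1 - t1*s)*(1 - t1*(s*s*s))*((1 - t2*(s*s))^2)
      ≤ (1 - t2*s)*(1 - t2*(s*s*s))*((1 - t1*(s*s))^2) := by nlinarith [hfac]
  have hlog := Real.log_le_log (by positivity) hpoly
  rw [Real.log_mul (by positivity) (by positivity), Real.log_mul hA1.ne' hB1.ne',
    Real.log_mul (by positivity) (by positivity), Real.log_mul hA2.ne' hB2.ne',
    Real.log_pow, Real.log_pow] at hlog
  push_cast at hlog
  linarith

/-- Core nonpositivity. -/
lemma dq_core_nonpos {s t : ℝ} (hs0 : 0 < s) (hs1 : s < 1) (ht0 : 0 < t) (ht1 : t < 1) :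
    Real.log (1 - t*s) + Real.log (1 - t*(s*s*s)) - 2 * Real.log (1 - t*(s*s)) ≤ 0 := by
  have hA : 0 < 1 - t*s := by nlinarith
  have hB : 0 < 1 - t*(s*s*s) := by nlinarith
  have hC : 0 < 1 - t*(s*s) := by nlinarith
  have hpoly : (1 - t*s)*(1 - t*(s*s*s)) ≤ (1 - t*(s*s))^2 := by nlinarith [mul_nonneg (mul_nonneg ht0.le hs0.le) (sq_nonneg (1-s))]
  have hlog := Real.log_le_log (by positivity) hpoly
  rw [Real.log_mul hA.ne' hB.ne', Real.log_pow] at hlog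
  push_cast at hlog
  linarith

/-- Core lower bound: `-d(t) ≤ t*s`. -/
lemma dq_core_bound {s t : ℝ} (hs0 : 0 < s) (hs1 : s < 1) (ht0 : 0 < t) (ht1 : t < 1) :
    -(Real.log (1 - t*s) + Real.log (1 - t*(s*s*s)) - 2 * Real.log (1 - t*(s*s))) ≤ t*s := by
  have hA : 0 < 1 - t*s := by nlinarith
  have hB : 0 < 1 - t*(s*s*s) := by nlinarith
  have hC : 0 < 1 - t*(s*s) := by nlinarith
  -- log C - log B ≤ 0 since C ≤ B
  have hCB : Real.log (1 - t*(s*s)) ≤ Real.log (1 - t*(s*s*s)) := by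
    apply Real.log_le_log hC
    nlinarith [mul_nonneg (mul_nonneg ht0.le (mul_nonneg hs0.le hs0.le)) (sub_nonneg.2 hs1.le)]
  -- log C - log A ≤ (C-A)/A ≤ t*s
  have hdiv : Real.log (1 - t*(s*s)) - Real.log (1 - t*s) ≤ t*s := by
    have h1 : Real.log ((1 - t*(s*s)) / (1 - t*s)) ≤ (1 - t*(s*s)) / (1 - t*s) - 1 :=
      Real.log_le_sub_one_of_pos (by positivity)
    rw [Real.log_div hC.ne' hA.ne'] at h1
    have h2 : (1 - t*(s*s)) / (1 - t*s) - 1 = (t*s*(1-s)) / (1 - t*s) := by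
      field_simp; ring
    have h3 : (t*s*(1-s)) / (1 - t*s) ≤ t*s := by
      rw [div_le_iff₀ hA]
      nlinarith [mul_nonneg (mul_nonneg ht0.le hs0.le) (mul_nonneg hs0.le (sub_nonneg.2 ht1.le))]
    linarith
  linarith

end core

noncomputable def Lq (q c : ℝ) : ℝ := ∑' n : ℕ, Real.log (1 - q ^ ((n : ℝ) + c))

noncomputable def dq (q x : ℝ) (n : ℕ) : ℝ :=
  Real.log (1 - q ^ ((n:ℝ) + (x+1/2))) + Real.log (1 - q ^ ((n:ℝ) + (x+3/2)))
    - 2 * Real.log (1 - q ^ ((n:ℝ) + (x+1)))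

noncomputable def Dq (q x : ℝ) : ℝ := Lq q (x+1/2) + Lq q (x+3/2) - 2 * Lq q (x+1)

section main
variable {q : ℝ} (hq0 : 0 < q) (hq1 : q < 1)

include hq0 hq1 in
lemma hasSum_Lq (c : ℝ) (hc : 0 < c) :
    HasSum (fun n : ℕ => Real.log (1 - q ^ ((n:ℝ)+c))) (Lq q c) :=
  (summable_log_q hq0 hq1 c hc).hasSum

include hq0 hq1 in
lemma Lq_shift (c : ℝ) (hc : 0 < c) : Lq q c = Real.log (1 - q ^ c) + Lq q (c+1) := by
  rw [Lq, Summable.tsum_eq_zero_add (summable_log_q hq0 hq1 c hc)]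
  congr 1
  · norm_num
  · rw [Lq]; apply tsum_congr; intro n; congr 2; push_cast; ring

include hq0 hq1 in
lemma qGamma_eq (y : ℝ) (hy : 0 < y) :
    qGamma q y = (1 - q) ^ ((1:ℝ) - y) * Real.exp (Lq q 1 - Lq q y) := by
  rw [qGamma]
  congr 1
  have hpos : ∀ r : ℝ, 0 < r → 0 < 1 - q ^ r := fun r hr => by
    have := qpow_lt_one hq0 hq1 hr; linarith
  have hposn : ∀ n : ℕ, 0 < (1 - q ^ ((n:ℝ)+1)) / (1 - q ^ ((n:ℝ)+y)) := fun n => by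
    have h1 := hpos ((n:ℝ)+1) (by positivity)
    have h2 := hpos ((n:ℝ)+y) (by positivity)
    positivity
  have hsum : HasSum (fun n : ℕ => Real.log ((1 - q ^ ((n:ℝ)+1)) / (1 - q ^ ((n:ℝ)+y))))
      (Lq q 1 - Lq q y) := by
    have h := (hasSum_Lq hq0 hq1 1 one_pos).sub (hasSum_Lq hq0 hq1 y hy)
    have hfe : (fun n : ℕ => Real.log ((1 - q ^ ((n:ℝ)+1)) / (1 - q ^ ((n:ℝ)+y))))
        = fun n : ℕ => Real.log (1 - q ^ ((n:ℝ)+1)) - Real.log (1 - q ^ ((n:ℝ)+y)) := by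
      funext n
      exact Real.log_div (hpos _ (by positivity)).ne' (hpos _ (by positivity)).ne'
    rw [hfe]; exact h
  exact (hasProd_exp_of_hasSum_log hposn hsum).tprod_eq

include hq0 hq1 in
lemma hasSum_dq (x : ℝ) (hx : 0 < x) : HasSum (dq q x) (Dq q x) := by
  have h1 := hasSum_Lq hq0 hq1 (x+1/2) (by linarith)
  have h2 := hasSum_Lq hq0 hq1 (x+3/2) (by linarith)
  have h3 := (hasSum_Lq hq0 hq1 (x+1) (by linarith)).mul_left 2
  exact (h1.add h2).sub h3

include hq0 hq1 in
lemma dq_repr (x : ℝ) (n : ℕ) :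
    dq q x n = Real.log (1 - q ^ ((n:ℝ)+x) * q ^ ((1:ℝ)/2))
      + Real.log (1 - q ^ ((n:ℝ)+x) * (q ^ ((1:ℝ)/2) * q ^ ((1:ℝ)/2) * q ^ ((1:ℝ)/2)))
      - 2 * Real.log (1 - q ^ ((n:ℝ)+x) * (q ^ ((1:ℝ)/2) * q ^ ((1:ℝ)/2))) := by
  rw [dq]
  rw [show q ^ ((n:ℝ)+x) * q ^ ((1:ℝ)/2) = q ^ ((n:ℝ)+(x+1/2)) by
    rw [← Real.rpow_add hq0]; congr 1; ring]
  rw [show q ^ ((n:ℝ)+x) * (q ^ ((1:ℝ)/2) * q ^ ((1:ℝ)/2) * q ^ ((1:ℝ)/2)) = q ^ ((n:ℝ)+(x+3/2)) by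
    rw [← Real.rpow_add hq0, ← Real.rpow_add hq0, ← Real.rpow_add hq0]; congr 1; ring]
  rw [show q ^ ((n:ℝ)+x) * (q ^ ((1:ℝ)/2) * q ^ ((1:ℝ)/2)) = q ^ ((n:ℝ)+(x+1)) by
    rw [← Real.rpow_add hq0, ← Real.rpow_add hq0]; congr 1; ring]

include hq0 hq1 in
lemma dq_mono {x y : ℝ} (hx : 0 < x) (hxy : x ≤ y) (n : ℕ) : dq q x n ≤ dq q y n := by
  rw [dq_repr hq0 hq1, dq_repr hq0 hq1]
  have hs0 : 0 < q ^ ((1:ℝ)/2) := Real.rpow_pos_of_pos hq0 _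
  have hs1 : q ^ ((1:ℝ)/2) < 1 := qpow_lt_one hq0 hq1 (by norm_num)
  have ht2 : 0 < q ^ ((n:ℝ)+y) := Real.rpow_pos_of_pos hq0 _
  have ht : q ^ ((n:ℝ)+y) ≤ q ^ ((n:ℝ)+x) :=
    Real.rpow_le_rpow_of_exponent_ge hq0 hq1.le (by linarith)
  have ht1 : q ^ ((n:ℝ)+x) < 1 := qpow_lt_one hq0 hq1 (by positivity)
  have := dq_core_mono hs0 hs1 ht2 ht ht1
  convert this using 2 <;> ring

include hq0 hq1 in
lemma dq_nonpos {x : ℝ} (hx : 0 < x) (n : ℕ) : dq q x n ≤ 0 := by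
  rw [dq_repr hq0 hq1]
  have hs0 : 0 < q ^ ((1:ℝ)/2) := Real.rpow_pos_of_pos hq0 _
  have hs1 : q ^ ((1:ℝ)/2) < 1 := qpow_lt_one hq0 hq1 (by norm_num)
  have ht0 : 0 < q ^ ((n:ℝ)+x) := Real.rpow_pos_of_pos hq0 _
  have ht1 : q ^ ((n:ℝ)+x) < 1 := qpow_lt_one hq0 hq1 (by positivity)
  have := dq_core_nonpos hs0 hs1 ht0 ht1
  convert this using 2 <;> ring

include hq0 hq1 in
lemma dq_bound {x : ℝ} (hx : 0 < x) (n : ℕ) :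
    -dq q x n ≤ q ^ ((1:ℝ)/2) * q ^ x * (q:ℝ) ^ (n:ℕ) := by
  rw [dq_repr hq0 hq1]
  have hs0 : 0 < q ^ ((1:ℝ)/2) := Real.rpow_pos_of_pos hq0 _
  have hs1 : q ^ ((1:ℝ)/2) < 1 := qpow_lt_one hq0 hq1 (by norm_num)
  have ht0 : 0 < q ^ ((n:ℝ)+x) := Real.rpow_pos_of_pos hq0 _
  have ht1 : q ^ ((n:ℝ)+x) < 1 := qpow_lt_one hq0 hq1 (by positivity)
  have h := dq_core_bound hs0 hs1 ht0 ht1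
  have hrw : q ^ ((n:ℝ)+x) * q ^ ((1:ℝ)/2) = q ^ ((1:ℝ)/2) * q ^ x * (q:ℝ) ^ (n:ℕ) := by
    rw [← Real.rpow_natCast q n, ← Real.rpow_add hq0, ← Real.rpow_add hq0,
      ← Real.rpow_add hq0]
    congr 1; ring
  calc -(Real.log (1 - q ^ ((n:ℝ)+x) * q ^ ((1:ℝ)/2))
      + Real.log (1 - q ^ ((n:ℝ)+x) * (q ^ ((1:ℝ)/2) * q ^ ((1:ℝ)/2) * q ^ ((1:ℝ)/2)))
      - 2 * Real.log (1 - q ^ ((n:ℝ)+x) * (q ^ ((1:ℝ)/2) * q ^ ((1:ℝ)/2))))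
      ≤ q ^ ((n:ℝ)+x) * q ^ ((1:ℝ)/2) := h
    _ = q ^ ((1:ℝ)/2) * q ^ x * (q:ℝ) ^ (n:ℕ) := hrw

end main

section final
variable {q : ℝ} (hq0 : 0 < q) (hq1 : q < 1)

include hq0 hq1 in
lemma G_eq (x : ℝ) (hx : 0 < x) :
    qBracket q (x + 1 / 2) ^ (-(1 / 2) : ℝ) * qGamma q (x + 1) / qGamma q (x + 1 / 2)
      = Real.exp (Dq q x / 2) := by
  have hp : 0 < 1 - q := by linarith
  have hb : 0 < 1 - q ^ (x + 1/2) := by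
    have := qpow_lt_one hq0 hq1 (show (0:ℝ) < x + 1/2 by linarith); linarith
  rw [qBracket, qGamma_eq hq0 hq1 (x+1) (by linarith), qGamma_eq hq0 hq1 (x+1/2) (by linarith)]
  rw [Real.rpow_def_of_pos (show (0:ℝ) < (1 - q ^ (x+1/2))/(1-q) by positivity),
    Real.rpow_def_of_pos hp, Real.rpow_def_of_pos hp, Real.log_div hb.ne' hp.ne']
  simp only [← Real.exp_add, ← Real.exp_sub]
  congr 1
  have hsh : Lq q (x+3/2) = Lq q (x+1/2) - Real.log (1 - q ^ (x+1/2)) := by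
    have h := Lq_shift hq0 hq1 (x+1/2) (by linarith)
    rw [show x+1/2+1 = x+3/2 by ring] at h
    linarith
  rw [Dq, hsh]
  ring

theorem qGammaRatio_G (q : ℝ) (hq : q ∈ Set.Ioo (0 : ℝ) 1) :
    MonotoneOn (fun x : ℝ => qBracket q (x + 1 / 2) ^ (-(1 / 2) : ℝ) * qGamma q (x + 1) / qGamma q (x + 1 / 2))
      (Set.Ioi (0 : ℝ)) ∧
    Filter.Tendsto (fun x : ℝ => qBracket q (x + 1 / 2) ^ (-(1 / 2) : ℝ) * qGamma q (x + 1) / qGamma q (x + 1 / 2))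
      Filter.atTop (nhds 1) ∧
    ∀ x : ℝ, 0 < x →
      qBracket q (x + 1 / 2) ^ (-(1 / 2) : ℝ) * qGamma q (x + 1) / qGamma q (x + 1 / 2) ≤ 1 := by
  obtain ⟨hq0, hq1⟩ := hq
  have hDle : ∀ x : ℝ, 0 < x → Dq q x ≤ 0 := fun x hx => by
    simpa using hasSum_le (fun n => dq_nonpos hq0 hq1 hx n) (hasSum_dq hq0 hq1 x hx) hasSum_zero
  refine ⟨?_, ?_, ?_⟩
  · intro x hx y hy hxy
    simp only
    rw [G_eq hq0 hq1 x hx, G_eq hq0 hq1 y hy]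
    apply Real.exp_le_exp.2
    have := hasSum_le (fun n => dq_mono hq0 hq1 hx hxy n)
      (hasSum_dq hq0 hq1 x hx) (hasSum_dq hq0 hq1 y hy)
    linarith
  · have hDge : ∀ x : ℝ, 0 < x → -(q ^ ((1:ℝ)/2) * q ^ x * (1-q)⁻¹) ≤ Dq q x := by
      intro x hx
      have hgeo : HasSum (fun n : ℕ => q ^ ((1:ℝ)/2) * q ^ x * (q:ℝ) ^ (n:ℕ))
          (q ^ ((1:ℝ)/2) * q ^ x * (1-q)⁻¹) :=
        (hasSum_geometric_of_lt_one hq0.le hq1).mul_left _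
      have h := hasSum_le (fun n => dq_bound hq0 hq1 hx n)
        (hasSum_dq hq0 hq1 x hx).neg hgeo
      linarith
    have hq0' : Filter.Tendsto (fun x : ℝ => q ^ x) atTop (nhds 0) :=
      tendsto_rpow_atTop_of_base_lt_one q (by linarith) hq1
    have hlower : Filter.Tendsto (fun x : ℝ => -(q ^ ((1:ℝ)/2) * q ^ x * (1-q)⁻¹)) atTop (nhds 0) := by
      have := (hq0'.const_mul (q ^ ((1:ℝ)/2))).mul_const (1-q)⁻¹
      simpa using this.neg
    have hD0 : Filter.Tendsto (Dq q) atTop (nhds 0) := by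
      apply tendsto_of_tendsto_of_tendsto_of_le_of_le' hlower tendsto_const_nhds
      · exact (Filter.eventually_gt_atTop 0).mono fun x hx => hDge x hx
      · exact (Filter.eventually_gt_atTop 0).mono fun x hx => hDle x hx
    have hexp : Filter.Tendsto (fun x : ℝ => Real.exp (Dq q x / 2)) atTop (nhds 1) := by
      have h2 : Filter.Tendsto (fun x : ℝ => Dq q x / 2) atTop (nhds 0) := by
        simpa using hD0.div_const 2
      exact (Real.continuous_exp.tendsto' 0 1 Real.exp_zero).comp h2
    apply hexp.congr'
    exact (Filter.eventually_gt_atTop 0).mono fun x hx => (G_eq hq0 hq1 x hx).symm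
  · intro x hx
    rw [G_eq hq0 hq1 x hx]
    rw [Real.exp_le_one_iff]
    linarith [hDle x hx]

end final
end

section
/- Let q ∈ (0,1) be fixed and define H(x) = √(π_q) · Γ_q(x+1) / Γ_q(x + 1/2) for x > 0, where π_q = (Γ_q(1/2))². Then H(x) tends to 1 as x → 0⁺ and H(x) tends to 1 + √q as x → 1⁻; in particular the bounds 1/√(π_q) and (1+√q)/√(π_q) for Γ_q(x+1)/Γ_q(x+1/2) on (0,1) are sharp. -/
open Real Filter Set

namespace QGammaAux

/-- The log-series of the infinite product in the denominator of `qGamma`. -/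
noncomputable def L (q x : ℝ) : ℝ := ∑' n : ℕ, Real.log (1 - q ^ ((n : ℝ) + x))

variable {q : ℝ}

lemma term_pos (hq0 : 0 < q) (hq1 : q < 1) {x : ℝ} (hx : 0 < x) (n : ℕ) :
    0 < 1 - q ^ ((n : ℝ) + x) := by
  have h : q ^ ((n : ℝ) + x) < 1 :=
    Real.rpow_lt_one hq0.le hq1 (by positivity)
  linarith

lemma abs_log_bound (hq0 : 0 < q) (hq1 : q < 1) {a x : ℝ} (ha : 0 < a) (hax : a ≤ x) (n : ℕ) :
    |Real.log (1 - q ^ ((n : ℝ) + x))| ≤ (q ^ a / (1 - q ^ a)) * q ^ n := by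
  set t : ℝ := q ^ ((n : ℝ) + x) with ht
  have htpos : 0 < t := Real.rpow_pos_of_pos hq0 _
  have hqa1 : q ^ a < 1 := Real.rpow_lt_one hq0.le hq1 ha
  have hqapos : 0 < q ^ a := Real.rpow_pos_of_pos hq0 _
  have hqn1 : (q : ℝ) ^ n ≤ 1 := pow_le_one₀ hq0.le hq1.le
  have hqnpos : (0:ℝ) < q ^ n := pow_pos hq0 _
  have ht_le : t ≤ q ^ n * q ^ a := by
    have : t = q ^ (n : ℝ) * q ^ x := by rw [ht, Real.rpow_add hq0]
    rw [this, Real.rpow_natCast]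
    exact mul_le_mul_of_nonneg_left
      (Real.rpow_le_rpow_of_exponent_ge hq0 hq1.le hax) hqnpos.le
  have ht_le' : t ≤ q ^ a := le_trans ht_le (by nlinarith)
  have ht1 : t < 1 := lt_of_le_of_lt ht_le' hqa1
  have h1t : 0 < 1 - t := by linarith
  -- |log (1 - t)| = -log (1 - t) ≤ t / (1 - t)
  have hlog_nonpos : Real.log (1 - t) ≤ 0 := Real.log_nonpos (by linarith) (by linarith)
  rw [abs_of_nonpos hlog_nonpos]
  have key : -Real.log (1 - t) ≤ t / (1 - t) := by
    have h2 : Real.log (1 - t)⁻¹ ≤ (1 - t)⁻¹ - 1 :=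
      Real.log_le_sub_one_of_pos (by positivity)
    rw [Real.log_inv] at h2
    have : (1 - t)⁻¹ - 1 = t / (1 - t) := by field_simp; ring
    linarith [this ▸ h2]
  refine key.trans ?_
  have : t / (1 - t) ≤ (q ^ n * q ^ a) / (1 - q ^ a) :=
    div_le_div₀ (by positivity) ht_le (by linarith) (by linarith)
  calc t / (1 - t) ≤ (q ^ n * q ^ a) / (1 - q ^ a) := this
    _ = (q ^ a / (1 - q ^ a)) * q ^ n := by ring

lemma summable_log (hq0 : 0 < q) (hq1 : q < 1) {x : ℝ} (hx : 0 < x) :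
    Summable fun n : ℕ => Real.log (1 - q ^ ((n : ℝ) + x)) := by
  refine Summable.of_norm_bounded
    (((summable_geometric_of_lt_one hq0.le hq1)).mul_left (q ^ x / (1 - q ^ x)))
    fun n => ?_
  simpa [Real.norm_eq_abs] using abs_log_bound hq0 hq1 hx le_rfl n

lemma L_continuousAt (hq0 : 0 < q) (hq1 : q < 1) {y : ℝ} (hy : 0 < y) :
    ContinuousAt (L q) y := by
  have ha : 0 < y / 2 := by linarith
  have hcont : ContinuousOn (L q) (Ioi (y / 2)) := by
    refine continuousOn_tsum (u := fun n : ℕ => (q ^ (y/2) / (1 - q ^ (y/2))) * q ^ n)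
      (fun n => ?_)
      (((summable_geometric_of_lt_one hq0.le hq1)).mul_left _)
      (fun n x hx => ?_)
    · intro x hx
      have hx' : (0:ℝ) < x := lt_trans ha hx
      have h1 : ContinuousAt (fun x : ℝ => 1 - q ^ ((n : ℝ) + x)) x := by
        have : ContinuousAt (fun x : ℝ => q ^ ((n : ℝ) + x)) x :=
          (Real.continuousAt_const_rpow (ne_of_gt hq0)).comp
            (by fun_prop)
        exact (continuousAt_const.sub this)
      exact (h1.log (ne_of_gt (term_pos hq0 hq1 hx' n))).continuousWithinAt
    · simpa [Real.norm_eq_abs] using abs_log_bound hq0 hq1 ha (le_of_lt hx) n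
  exact hcont.continuousAt (isOpen_Ioi.mem_nhds (by simpa using by linarith : y / 2 < y))

lemma hasProd_exp {f : ℕ → ℝ} {a : ℝ} (h : HasSum f a) :
    HasProd (fun n => Real.exp (f n)) (Real.exp a) := by
  have := (Real.continuous_exp.continuousAt (x := a)).tendsto.comp h
  simpa [HasProd, Function.comp_def, Real.exp_sum] using this

lemma qGamma_eq (hq0 : 0 < q) (hq1 : q < 1) {x : ℝ} (hx : 0 < x) :
    qGamma q x = (1 - q) ^ (1 - x) * Real.exp (L q 1 - L q x) := by
  have hs : HasSum (fun n : ℕ =>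
      Real.log (1 - q ^ ((n : ℝ) + 1)) - Real.log (1 - q ^ ((n : ℝ) + x)))
      (L q 1 - L q x) :=
    ((summable_log hq0 hq1 one_pos).hasSum).sub ((summable_log hq0 hq1 hx).hasSum)
  have hfun : (fun n : ℕ => Real.exp (Real.log (1 - q ^ ((n : ℝ) + 1)) -
        Real.log (1 - q ^ ((n : ℝ) + x)))) =
      fun n : ℕ => (1 - q ^ ((n : ℝ) + 1)) / (1 - q ^ ((n : ℝ) + x)) :=
    funext fun n => by
      rw [Real.exp_sub, Real.exp_log (term_pos hq0 hq1 one_pos n),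
        Real.exp_log (term_pos hq0 hq1 hx n)]
  have hp : HasProd (fun n : ℕ => (1 - q ^ ((n : ℝ) + 1)) / (1 - q ^ ((n : ℝ) + x)))
      (Real.exp (L q 1 - L q x)) := hfun ▸ hasProd_exp hs
  rw [qGamma, hp.tprod_eq]

lemma L_rec (hq0 : 0 < q) (hq1 : q < 1) {x : ℝ} (hx : 0 < x) :
    L q x = Real.log (1 - q ^ x) + L q (x + 1) := by
  rw [L, Summable.tsum_eq_zero_add (summable_log hq0 hq1 hx)]
  congr 1
  · norm_num
  · rw [L]
    exact tsum_congr fun n => by congr 2; push_cast; ring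

end QGammaAux

theorem qGammaRatio_H_limits (q : ℝ) (hq : q ∈ Set.Ioo (0 : ℝ) 1) :
    Filter.Tendsto
      (fun x : ℝ => Real.sqrt ((qGamma q (1 / 2)) ^ 2) * qGamma q (x + 1) / qGamma q (x + 1 / 2))
      (nhdsWithin 0 (Set.Ioi 0)) (nhds 1) ∧
    Filter.Tendsto
      (fun x : ℝ => Real.sqrt ((qGamma q (1 / 2)) ^ 2) * qGamma q (x + 1) / qGamma q (x + 1 / 2))
      (nhdsWithin 1 (Set.Iio 1)) (nhds (1 + Real.sqrt q)) := by
  obtain ⟨hq0, hq1⟩ := hq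
  set Lf := QGammaAux.L q with hLf
  have hG : qGamma q (1/2) = (1-q) ^ (1-(1/2:ℝ)) * Real.exp (Lf 1 - Lf (1/2)) :=
    QGammaAux.qGamma_eq hq0 hq1 (by norm_num)
  have hp : (0:ℝ) < 1 - q := by linarith
  have hGpos : 0 < qGamma q (1/2) := by
    rw [hG]; positivity
  have hsq : Real.sqrt ((qGamma q (1/2)) ^ 2) = qGamma q (1/2) := Real.sqrt_sq hGpos.le
  set F : ℝ → ℝ := fun x => Real.exp ((Lf 1 - Lf (1/2)) + (Lf (x+1/2) - Lf (x+1))) with hF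
  have key : ∀ x : ℝ, 0 < x →
      Real.sqrt ((qGamma q (1/2)) ^ 2) * qGamma q (x+1) / qGamma q (x+1/2) = F x := by
    intro x hx
    rw [hsq, hG, QGammaAux.qGamma_eq hq0 hq1 (by linarith : (0:ℝ) < x+1),
        QGammaAux.qGamma_eq hq0 hq1 (by linarith : (0:ℝ) < x+1/2),
        Real.rpow_def_of_pos hp, Real.rpow_def_of_pos hp, Real.rpow_def_of_pos hp]
    simp only [hF, ← Real.exp_add, ← Real.exp_sub]
    congr 1
    ring
  have hFcont : ∀ y : ℝ, 0 < y + 1/2 → ContinuousAt F y := by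
    intro y hy
    have h1 : ContinuousAt (fun x : ℝ => Lf (x+1/2)) y :=
      ContinuousAt.comp (f := fun x : ℝ => x + 1/2) (x := y)
        (QGammaAux.L_continuousAt hq0 hq1 hy) (continuousAt_id.add continuousAt_const)
    have h2 : ContinuousAt (fun x : ℝ => Lf (x+1)) y :=
      ContinuousAt.comp (f := fun x : ℝ => x + 1) (x := y)
        (QGammaAux.L_continuousAt hq0 hq1 (by linarith : (0:ℝ) < y + 1))
        (continuousAt_id.add continuousAt_const)
    exact Real.continuous_exp.continuousAt.comp (continuousAt_const.add (h1.sub h2))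
  constructor
  · have t1 : Tendsto F (nhdsWithin 0 (Set.Ioi 0)) (nhds (F 0)) :=
      ((hFcont 0 (by norm_num)).tendsto).mono_left nhdsWithin_le_nhds
    have hF0 : F 0 = 1 := by
      simp only [hF, zero_add]
      rw [show (Lf 1 - Lf (1/2)) + (Lf (1/2) - Lf 1) = 0 by ring, Real.exp_zero]
    rw [hF0] at t1
    refine Tendsto.congr' ?_ t1
    filter_upwards [self_mem_nhdsWithin] with x hx
    exact (key x hx).symm
  · have t2 : Tendsto F (nhdsWithin 1 (Set.Iio 1)) (nhds (F 1)) :=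
      ((hFcont 1 (by norm_num)).tendsto).mono_left nhdsWithin_le_nhds
    have hs1 : Real.sqrt q < 1 := by
      have h := Real.sqrt_lt_sqrt hq0.le hq1
      simpa using h
    have hF1 : F 1 = 1 + Real.sqrt q := by
      have e1 : Lf 1 = Real.log (1 - q ^ (1:ℝ)) + Lf 2 := by
        have h := QGammaAux.L_rec hq0 hq1 (q := q) one_pos
        rw [hLf, h]; norm_num
      have e2 : Lf (1/2) = Real.log (1 - q ^ ((1:ℝ)/2)) + Lf (3/2) := by
        have h := QGammaAux.L_rec hq0 hq1 (q := q) (by norm_num : (0:ℝ) < 1/2)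
        rw [hLf, h]; norm_num
      have h1q : (0:ℝ) < 1 - q ^ (1:ℝ) := by rw [Real.rpow_one]; linarith
      have h1sq : (0:ℝ) < 1 - q ^ ((1:ℝ)/2) := by
        have : q ^ ((1:ℝ)/2) < 1 := Real.rpow_lt_one hq0.le hq1 (by norm_num)
        linarith
      simp only [hF]
      rw [show (1:ℝ)+1/2 = 3/2 by norm_num, show (1:ℝ)+1 = 2 by norm_num, e1, e2,
        show (Real.log (1-q^(1:ℝ)) + Lf 2 - (Real.log (1-q^((1:ℝ)/2)) + Lf (3/2)))
          + (Lf (3/2) - Lf 2)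
          = Real.log (1-q^(1:ℝ)) - Real.log (1-q^((1:ℝ)/2)) by ring,
        Real.exp_sub, Real.exp_log h1q, Real.exp_log h1sq, Real.rpow_one,
        ← Real.sqrt_eq_rpow,
        div_eq_iff (ne_of_gt (by linarith : (0:ℝ) < 1 - Real.sqrt q))]
      nlinarith [Real.sq_sqrt hq0.le]
    rw [hF1] at t2
    refine Tendsto.congr' ?_ t2
    filter_upwards [(eventually_gt_nhds one_pos).filter_mono nhdsWithin_le_nhds] with x hx
    exact (key x hx).symm
end
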